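/- The Gaussian mechanism M(d) = f(d) + N(0, σ²I) in one dimension with noise scale σ > C·√(2 log(1.25/δ))/ε, where C = sup over adjacent d, d' of |f(d) - f(d')| and 0 < ε ≤ 1, satisfies (ε, δ)-differential privacy: for all adjacent d, d' and all measurable S, Pr[M(d) ∈ S] ≤ e^ε Pr[M(d') ∈ S] + δ. -/

import Mathlib

open MeasureTheory ProbabilityTheory Set
open scoped NNReal ENNReal

namespace GaussDPAux

open Real

variable {v : ℝ≥0}

lemma tail_shift (m t : ℝ) (hv : v ≠ 0) :
    gaussianReal m v {x | t < x - m} = gaussianReal 0 v (Set.Ioi t) := by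
  have hmap := gaussianReal_map_add_const (μ := 0) (v := v) m
  rw [zero_add] at hmap
  have hms : MeasurableSet {x : ℝ | t < x - m} :=
    measurableSet_lt measurable_const (measurable_id.sub_const m)
  rw [← hmap, Measure.map_apply (measurable_add_const m) hms]
  congr 1
  ext x
  simp only [Set.mem_preimage, Set.mem_setOf_eq, Set.mem_Ioi]
  constructor <;> intro h <;> linarith

lemma tail_shift_neg (m t : ℝ) (hv : v ≠ 0) :
    gaussianReal m v {x | t < m - x} = gaussianReal 0 v (Set.Ioi t) := by
  have hmap := gaussianReal_map_add_const (μ := 0) (v := v) m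
  rw [zero_add] at hmap
  have hneg := gaussianReal_map_const_mul (μ := (0:ℝ)) (v := v) (-1)
  have hone : (⟨(-1:ℝ)^2, sq_nonneg _⟩ : ℝ≥0) = 1 := by ext; norm_num
  replace hneg : Measure.map (fun x : ℝ => -1 * x) (gaussianReal 0 v) = gaussianReal 0 v := by
    rw [hneg]; congr 1
    · simp
    · ext; simp
  have hms : MeasurableSet {x : ℝ | t < m - x} :=
    measurableSet_lt measurable_const (measurable_const.sub measurable_id)
  rw [← hmap, Measure.map_apply (measurable_add_const m) hms]
  have h1 : (· + m) ⁻¹' {x : ℝ | t < m - x} = (fun x : ℝ => -1 * x) ⁻¹' (Set.Ioi t) := by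
    ext x
    simp only [Set.mem_preimage, Set.mem_setOf_eq, Set.mem_Ioi]
    constructor <;> intro h <;> linarith
  rw [h1, ← Measure.map_apply (f := fun x : ℝ => -1 * x) (by fun_prop) measurableSet_Ioi, hneg]

lemma half (hv : v ≠ 0) : ∫ x in Set.Ioi (0:ℝ), gaussianPDFReal 0 v x = 1/2 := by
  have hint := integrable_gaussianPDFReal 0 v
  have h1 : ∫ x in Set.Iic (0:ℝ), gaussianPDFReal 0 v x
      = ∫ x in Set.Ioi (0:ℝ), gaussianPDFReal 0 v x := by
    have h2 := integral_comp_neg_Ioi (0:ℝ) (gaussianPDFReal 0 v)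
    rw [neg_zero] at h2
    rw [← h2]
    refine setIntegral_congr_fun measurableSet_Ioi fun x _ => ?_
    simp [gaussianPDFReal, neg_sq]
  have h3 := intervalIntegral.integral_Iic_add_Ioi (b := (0:ℝ)) hint.integrableOn hint.integrableOn
  rw [integral_gaussianPDFReal_eq_one 0 hv] at h3
  linarith

lemma half_m (m : ℝ) (hv : v ≠ 0) : ∫ x in Set.Ioi m, gaussianPDFReal m v x = 1/2 := by
  have h := tail_shift (v := v) m 0 hv
  have hset : {x : ℝ | (0:ℝ) < x - m} = Set.Ioi m := by
    ext x; simp [Set.mem_Ioi, sub_pos]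
  rw [hset] at h
  rw [gaussianReal_apply_eq_integral _ hv, gaussianReal_apply_eq_integral _ hv] at h
  have h2 : ∫ x in Set.Ioi m, gaussianPDFReal m v x = ∫ x in Set.Ioi (0:ℝ), gaussianPDFReal 0 v x := by
    rw [← ENNReal.ofReal_eq_ofReal_iff
      (setIntegral_nonneg measurableSet_Ioi fun x _ => gaussianPDFReal_nonneg m v x)
      (setIntegral_nonneg measurableSet_Ioi fun x _ => gaussianPDFReal_nonneg 0 v x)]
    exact h
  rw [h2, half hv]

lemma tail_le_of_nonneg (hv : v ≠ 0) {t : ℝ} (ht : 0 ≤ t) :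
    ∫ x in Set.Ioi t, gaussianPDFReal 0 v x ≤ Real.exp (-t^2/(2*(v:ℝ))) * (1/2) := by
  have hvpos : 0 < (v:ℝ) := NNReal.coe_pos.mpr (pos_iff_ne_zero.mpr hv)
  calc ∫ x in Set.Ioi t, gaussianPDFReal 0 v x
      ≤ ∫ x in Set.Ioi t, Real.exp (-t^2/(2*(v:ℝ))) * gaussianPDFReal t v x := by
        refine setIntegral_mono_on ((integrable_gaussianPDFReal 0 v).integrableOn)
          (((integrable_gaussianPDFReal t v).const_mul _).integrableOn) measurableSet_Ioi
          fun x hx => ?_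
        have hxt : t < x := hx
        simp only [gaussianPDFReal, sub_zero]
        have hk : (0:ℝ) ≤ (Real.sqrt (2*π*(v:ℝ)))⁻¹ := by positivity
        have hexp : Real.exp (-x^2/(2*(v:ℝ))) ≤
            Real.exp (-t^2/(2*(v:ℝ))) * Real.exp (-(x-t)^2/(2*(v:ℝ))) := by
          rw [← Real.exp_add, Real.exp_le_exp, ← add_div, div_le_div_iff_of_pos_right]
          · nlinarith [ht, hxt]
          · positivity
        calc (Real.sqrt (2*π*(v:ℝ)))⁻¹ * Real.exp (-x^2/(2*(v:ℝ)))
            ≤ (Real.sqrt (2*π*(v:ℝ)))⁻¹ *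
              (Real.exp (-t^2/(2*(v:ℝ))) * Real.exp (-(x-t)^2/(2*(v:ℝ)))) :=
              mul_le_mul_of_nonneg_left hexp hk
          _ = Real.exp (-t^2/(2*(v:ℝ))) *
              ((Real.sqrt (2*π*(v:ℝ)))⁻¹ * Real.exp (-(x-t)^2/(2*(v:ℝ)))) := by ring
    _ = Real.exp (-t^2/(2*(v:ℝ))) * ∫ x in Set.Ioi t, gaussianPDFReal t v x := by
        rw [integral_const_mul]
    _ = Real.exp (-t^2/(2*(v:ℝ))) * (1/2) := by rw [half_m t hv]

lemma tail_le_of_neg (hv : v ≠ 0) {t : ℝ} (ht : t < 0) :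
    ∫ x in Set.Ioi t, gaussianPDFReal 0 v x ≤ 1/2 + (-t) * (Real.sqrt (2*π*(v:ℝ)))⁻¹ := by
  have hvpos : 0 < (v:ℝ) := NNReal.coe_pos.mpr (pos_iff_ne_zero.mpr hv)
  have hint := (integrable_gaussianPDFReal 0 v).integrableOn (s := Set.Ioi t)
  have hint2 := (integrable_gaussianPDFReal 0 v).integrableOn (s := Set.Ioc t 0)
  have hint3 := (integrable_gaussianPDFReal 0 v).integrableOn (s := Set.Ioi (0:ℝ))
  have hsplit : ∫ x in Set.Ioi t, gaussianPDFReal 0 v x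
      = (∫ x in Set.Ioc t 0, gaussianPDFReal 0 v x)
        + ∫ x in Set.Ioi (0:ℝ), gaussianPDFReal 0 v x := by
    rw [← setIntegral_union (Set.Ioc_disjoint_Ioi le_rfl) measurableSet_Ioi hint2 hint3,
      Set.Ioc_union_Ioi_eq_Ioi ht.le]
  have hbound : ∫ x in Set.Ioc t 0, gaussianPDFReal 0 v x
      ≤ (-t) * (Real.sqrt (2*π*(v:ℝ)))⁻¹ := by
    have hconst : IntegrableOn (fun _ : ℝ => (Real.sqrt (2*π*(v:ℝ)))⁻¹) (Set.Ioc t 0) := by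
      exact integrableOn_const measure_Ioc_lt_top.ne
    calc ∫ x in Set.Ioc t 0, gaussianPDFReal 0 v x
        ≤ ∫ _x in Set.Ioc t 0, (Real.sqrt (2*π*(v:ℝ)))⁻¹ := by
          refine setIntegral_mono_on hint2 hconst measurableSet_Ioc fun x _ => ?_
          simp only [gaussianPDFReal, sub_zero]
          have h1 : Real.exp (-x^2/(2*(v:ℝ))) ≤ 1 := by
            rw [Real.exp_le_one_iff]
            apply div_nonpos_of_nonpos_of_nonneg (neg_nonpos.mpr (sq_nonneg _))
            positivity
          calc (Real.sqrt (2*π*(v:ℝ)))⁻¹ * Real.exp (-x^2/(2*(v:ℝ)))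
              ≤ (Real.sqrt (2*π*(v:ℝ)))⁻¹ * 1 := mul_le_mul_of_nonneg_left h1 (by positivity)
            _ = (Real.sqrt (2*π*(v:ℝ)))⁻¹ := mul_one _
      _ = (volume (Set.Ioc t 0)).toReal * (Real.sqrt (2*π*(v:ℝ)))⁻¹ := by
          rw [setIntegral_const, smul_eq_mul, measureReal_def]
      _ = (-t) * (Real.sqrt (2*π*(v:ℝ)))⁻¹ := by
          rw [Real.volume_Ioc, ENNReal.toReal_ofReal (by linarith)]
          ring_nf
  rw [hsplit, half hv]
  linarith

end GaussDPAux

set_option maxHeartbeats 1200000 in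
/-- The one-dimensional Gaussian mechanism `M(d) = f(d) + N(0, σ²)`
with noise scale `σ > C·√(2 log(1.25/δ))/ε`, where `C` bounds `|f(d) - f(d')|` over
adjacent `d, d'` and `0 < ε ≤ 1`, satisfies `(ε, δ)`-differential privacy: for all
adjacent `d, d'` and all measurable `S`,
`Pr[M(d) ∈ S] ≤ e^ε Pr[M(d') ∈ S] + δ`.  (The law of `M(d)` is `N(f(d), σ²)`.) -/
theorem gaussian_mechanism_dp
    {D : Type*} (Adj : D → D → Prop) (f : D → ℝ)
    (C ε δ σ : ℝ)
    (hC : ∀ d d', Adj d d' → |f d - f d'| ≤ C)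
    (hε0 : 0 < ε) (hε1 : ε ≤ 1) (hδ0 : 0 < δ) (hδ1 : δ < 1)
    (hσ0 : 0 < σ)
    (hσ : C * Real.sqrt (2 * Real.log (1.25 / δ)) / ε < σ) :
    ∀ d d', Adj d d' → ∀ S : Set ℝ, MeasurableSet S →
      gaussianReal (f d) (Real.toNNReal (σ ^ 2)) S
        ≤ ENNReal.ofReal (Real.exp ε) * gaussianReal (f d') (Real.toNNReal (σ ^ 2)) S
          + ENNReal.ofReal δ := by
  intro d d' hadj S _hS
  set m := f d with hm_def
  set m' := f d' with hm'_def
  have hDC : |m - m'| ≤ C := hC d d' hadj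
  set v : ℝ≥0 := Real.toNNReal (σ ^ 2) with hv_def
  have hvR : (v:ℝ) = σ^2 := Real.coe_toNNReal _ (sq_nonneg σ)
  have hvpos : 0 < (v:ℝ) := by rw [hvR]; positivity
  have hvne : v ≠ 0 := by
    intro h
    rw [h] at hvpos
    simp at hvpos
  have hexpe : (1:ℝ) ≤ Real.exp ε := by
    rw [← Real.exp_zero]
    exact Real.exp_le_exp.mpr hε0.le
  by_cases hD0 : m - m' = 0
  · have hmm : m = m' := sub_eq_zero.mp hD0
    rw [hmm]
    calc gaussianReal m' v S = 1 * gaussianReal m' v S := (one_mul _).symm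
      _ ≤ ENNReal.ofReal (Real.exp ε) * gaussianReal m' v S :=
          mul_le_mul_left (ENNReal.one_le_ofReal.mpr hexpe) _
      _ ≤ ENNReal.ofReal (Real.exp ε) * gaussianReal m' v S + ENNReal.ofReal δ := le_self_add
  · have hDabs : 0 < |m - m'| := abs_pos.mpr hD0
    have hC0 : 0 < C := lt_of_lt_of_le hDabs hDC
    set L := Real.log (1.25 / δ) with hL_def
    have hL0 : 0 < L := Real.log_pos (by rw [lt_div_iff₀ hδ0]; linarith)
    have hδeq : δ = 1.25 * Real.exp (-L) := by
      rw [Real.exp_neg, hL_def, Real.exp_log (by positivity)]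
      field_simp
    have hσε : C * Real.sqrt (2*L) < σ * ε := by
      have h := (div_lt_iff₀ hε0).mp hσ
      linarith
    set tC : ℝ := σ^2 * ε / C - C / 2 with htC_def
    set B : Set ℝ := {x | 2 * σ^2 * ε < (x - m')^2 - (x - m)^2} with hB_def
    have hBmeas : MeasurableSet B :=
      measurableSet_lt measurable_const
        (((measurable_id.sub_const m').pow_const 2).sub ((measurable_id.sub_const m).pow_const 2))
    -- pointwise density comparison outside B
    have hgood : ∀ x ∉ B, gaussianPDF m v x ≤ ENNReal.ofReal (Real.exp ε) * gaussianPDF m' v x := by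
      intro x hx
      simp only [hB_def, Set.mem_setOf_eq, not_lt] at hx
      rw [gaussianPDF, gaussianPDF, ← ENNReal.ofReal_mul (Real.exp_nonneg ε)]
      apply ENNReal.ofReal_le_ofReal
      simp only [gaussianPDFReal]
      have h2v : (0:ℝ) < 2 * (v:ℝ) := by positivity
      have hk : (0:ℝ) ≤ (Real.sqrt (2*Real.pi*(v:ℝ)))⁻¹ := by positivity
      have hexp : Real.exp (-(x - m)^2/(2*(v:ℝ))) ≤
          Real.exp ε * Real.exp (-(x - m')^2/(2*(v:ℝ))) := by
        rw [← Real.exp_add, Real.exp_le_exp, div_le_iff₀ h2v, add_mul,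
          div_mul_cancel₀ _ h2v.ne', hvR]
        nlinarith [hx]
      calc (Real.sqrt (2*Real.pi*(v:ℝ)))⁻¹ * Real.exp (-(x - m)^2/(2*(v:ℝ)))
          ≤ (Real.sqrt (2*Real.pi*(v:ℝ)))⁻¹ * (Real.exp ε * Real.exp (-(x - m')^2/(2*(v:ℝ)))) :=
            mul_le_mul_of_nonneg_left hexp hk
        _ = Real.exp ε * ((Real.sqrt (2*Real.pi*(v:ℝ)))⁻¹ * Real.exp (-(x - m')^2/(2*(v:ℝ)))) := by
            ring
    have h1 : gaussianReal m v (S \ B) ≤ ENNReal.ofReal (Real.exp ε) * gaussianReal m' v S := by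
      calc gaussianReal m v (S \ B)
          ≤ ENNReal.ofReal (Real.exp ε) * gaussianReal m' v (S \ B) := by
            rw [gaussianReal_apply _ hvne, gaussianReal_apply _ hvne,
              ← lintegral_const_mul _ (measurable_gaussianPDF m' v)]
            exact setLIntegral_mono ((measurable_gaussianPDF m' v).const_mul _)
              fun x hx => hgood x hx.2
        _ ≤ ENNReal.ofReal (Real.exp ε) * gaussianReal m' v S :=
            mul_le_mul_right (measure_mono Set.diff_subset) _
    -- arithmetic helper
    have hσ2ε : (0:ℝ) < σ^2 * ε := by positivity
    have haux : ∀ y a : ℝ, 0 < a → a ≤ C → 2*σ^2*ε < 2*a*y + a^2 → tC < y := by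
      intro y a ha haC h
      have hkey : σ^2*ε/C < y + C/2 := by
        rw [div_lt_iff₀ hC0]
        nlinarith [mul_lt_mul_of_pos_left h hC0,
          mul_nonneg (sub_nonneg.mpr haC) (by positivity : (0:ℝ) ≤ C*a + 2*(σ^2*ε))]
      rw [htC_def]
      linarith
    -- the bad set is contained in a tail
    have htail : gaussianReal m v B ≤ gaussianReal 0 v (Set.Ioi tC) := by
      rcases lt_or_gt_of_ne hD0 with hlt | hgt
      · -- m - m' < 0
        refine (measure_mono ?_).trans (le_of_eq (GaussDPAux.tail_shift_neg m tC hvne))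
        intro x hx
        simp only [hB_def, Set.mem_setOf_eq] at hx ⊢
        have hexp : (x - m')^2 - (x - m)^2 = 2*(m' - m)*(m - x) + (m' - m)^2 := by ring
        refine haux (m - x) (m' - m) (by linarith) ?_ (by linarith [hx, hexp])
        calc m' - m ≤ |m' - m| := le_abs_self _
          _ = |m - m'| := abs_sub_comm _ _
          _ ≤ C := hDC
      · -- 0 < m - m'
        refine (measure_mono ?_).trans (le_of_eq (GaussDPAux.tail_shift m tC hvne))
        intro x hx
        simp only [hB_def, Set.mem_setOf_eq] at hx ⊢
        have hexp : (x - m')^2 - (x - m)^2 = 2*(m - m')*(x - m) + (m - m')^2 := by ring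
        refine haux (x - m) (m - m') hgt ((le_abs_self _).trans hDC) (by linarith [hx, hexp])
    have h2 : gaussianReal 0 v (Set.Ioi tC) ≤ ENNReal.ofReal δ := by
      rw [gaussianReal_apply_eq_integral _ hvne]
      apply ENNReal.ofReal_le_ofReal
      rcases le_or_gt (1/4 : ℝ) L with hL4 | hL4
      · -- large L case : Gaussian tail bound
        have hs2 : (Real.sqrt (2*L))^2 = 2*L := Real.sq_sqrt (by positivity)
        set s := Real.sqrt (2*L) with hs_def
        have hs0 : 0 < s := Real.sqrt_pos.mpr (by linarith)
        have hA1 : σ * s < σ^2 * ε / C := by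
          rw [lt_div_iff₀ hC0]
          nlinarith [hσε, hσ0]
        have hA2 : C / 2 < σ / (2*s) := by
          rw [div_lt_div_iff₀ (by norm_num) (by linarith)]
          nlinarith [hσε, hε1, hσ0]
        set r := s - 1/(2*s) with hr_def
        have hr0 : 0 ≤ r := by
          rw [hr_def, sub_nonneg, div_le_iff₀ (by linarith : (0:ℝ) < 2*s)]
          nlinarith [hs2, hL4]
        have hσr : σ * (s - 1/(2*s)) = σ*s - σ/(2*s) := by field_simp
        have htCr : σ * r ≤ tC := by
          rw [hr_def, hσr, htC_def]
          linarith
        have htC0 : 0 ≤ tC := le_trans (by positivity) htCr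
        refine le_trans (GaussDPAux.tail_le_of_nonneg hvne htC0) ?_
        rw [hδeq]
        have hAexp : -tC^2/(2*(v:ℝ)) ≤ -(r^2)/2 := by
          rw [hvR, div_le_div_iff₀ (by positivity) (by norm_num)]
          nlinarith [mul_self_le_mul_self (mul_nonneg hσ0.le hr0) htCr, hσ0]
        have hss : s * (1/(2*s)) = 1/2 := by field_simp
        have hr2 : 2*L - 1 ≤ r^2 := by
          rw [hr_def]
          nlinarith [sq_nonneg (1/(2*s)), hss, hs2]
        have hB2 : -(r^2)/2 + L ≤ 1/2 := by nlinarith [hr2]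
        have hhalf : Real.exp ((1:ℝ)/2) ≤ 2.5 := by
          have hmul : Real.exp ((1:ℝ)/2) * Real.exp ((1:ℝ)/2) = Real.exp 1 := by
            rw [← Real.exp_add]; norm_num
          nlinarith [Real.exp_one_lt_d9, Real.exp_pos ((1:ℝ)/2)]
        have he : Real.exp (-(r^2)/2 + L) ≤ 2.5 :=
          le_trans (Real.exp_le_exp.mpr hB2) hhalf
        have hsplit : Real.exp (-(r^2)/2) = Real.exp (-(r^2)/2 + L) * Real.exp (-L) := by
          rw [← Real.exp_add]; congr 1; ring
        calc Real.exp (-tC^2/(2*(v:ℝ))) * (1/2)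
            ≤ Real.exp (-(r^2)/2) * (1/2) :=
              mul_le_mul_of_nonneg_right (Real.exp_le_exp.mpr hAexp) (by norm_num)
          _ = Real.exp (-(r^2)/2 + L) * Real.exp (-L) * (1/2) := by rw [hsplit]
          _ ≤ 2.5 * Real.exp (-L) * (1/2) := by
              have := (Real.exp_pos (-L)).le
              nlinarith [he, Real.exp_pos (-L)]
          _ = 1.25 * Real.exp (-L) := by ring
      · -- small L case : δ is large
        have hδbig : (0.9375:ℝ) ≤ δ := by
          rw [hδeq]
          have h := Real.add_one_le_exp (-L)
          nlinarith [hL4, hL0]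
        rcases le_or_gt 0 tC with htC0 | htC0
        · refine le_trans (GaussDPAux.tail_le_of_nonneg hvne htC0) ?_
          have hle1 : Real.exp (-tC^2/(2*(v:ℝ))) ≤ 1 := by
            rw [Real.exp_le_one_iff]
            apply div_nonpos_of_nonpos_of_nonneg (neg_nonpos.mpr (sq_nonneg _))
            positivity
          nlinarith
        · refine le_trans (GaussDPAux.tail_le_of_neg hvne htC0) ?_
          have hlog125 : (0.2:ℝ) ≤ Real.log 1.25 := by
            have h := Real.log_le_sub_one_of_pos (show (0:ℝ) < (1.25:ℝ)⁻¹ by norm_num)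
            rw [Real.log_inv] at h
            norm_num at h
            linarith
          have hL5 : (1/5:ℝ) < L := by
            have ha : Real.log 1.25 < L := by
              rw [hL_def]
              apply Real.log_lt_log (by norm_num)
              rw [lt_div_iff₀ hδ0]
              nlinarith
            linarith
          have hs63 : (0.63:ℝ) ≤ Real.sqrt (2*L) := by
            have ha : Real.sqrt 0.3969 ≤ Real.sqrt (2*L) := Real.sqrt_le_sqrt (by linarith)
            have hb : Real.sqrt 0.3969 = 0.63 := by
              rw [show (0.3969:ℝ) = 0.63^2 by norm_num, Real.sqrt_sq (by norm_num)]
            linarith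
          have hCσ : 0.63 * C < σ := by
            nlinarith [hσε, hε1, hε0, hC0]
          have hsqrt : 2.4 * σ ≤ Real.sqrt (2*Real.pi*(v:ℝ)) := by
            rw [hvR]
            have ha : Real.sqrt (5.76*σ^2) ≤ Real.sqrt (2*Real.pi*σ^2) :=
              Real.sqrt_le_sqrt (by nlinarith [Real.pi_gt_three, sq_nonneg σ])
            have hb : Real.sqrt (5.76*σ^2) = 2.4*σ := by
              rw [show (5.76:ℝ)*σ^2 = (2.4*σ)^2 by ring, Real.sqrt_sq (by positivity)]
            linarith
          have h24 : (0:ℝ) < 2.4*σ := by positivity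
          have hinv : (Real.sqrt (2*Real.pi*(v:ℝ)))⁻¹ ≤ (2.4*σ)⁻¹ :=
            inv_anti₀ h24 hsqrt
          have htCle : -tC ≤ C/2 := by
            rw [htC_def]
            have : (0:ℝ) ≤ σ^2*ε/C := by positivity
            linarith
          have hterm : (-tC) * (Real.sqrt (2*Real.pi*(v:ℝ)))⁻¹ ≤ (C/2) * (2.4*σ)⁻¹ :=
            mul_le_mul htCle hinv (by positivity) (by linarith)
          have hσu : σ * (2.4*σ)⁻¹ = 1/2.4 := by
            field_simp
          have hupos : (0:ℝ) < (2.4*σ)⁻¹ := by positivity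
          have hfin : (C/2) * (2.4*σ)⁻¹ ≤ 0.34 := by
            nlinarith [mul_pos (sub_pos.mpr hCσ) hupos, hσu]
          linarith
    calc gaussianReal m v S
        ≤ gaussianReal m v (S ∩ B) + gaussianReal m v (S \ B) :=
          measure_le_inter_add_diff _ S B
      _ ≤ gaussianReal m v B + gaussianReal m v (S \ B) :=
          add_le_add_left (measure_mono Set.inter_subset_right) _
      _ ≤ gaussianReal 0 v (Set.Ioi tC) + ENNReal.ofReal (Real.exp ε) * gaussianReal m' v S :=
          add_le_add htail h1
      _ ≤ ENNReal.ofReal δ + ENNReal.ofReal (Real.exp ε) * gaussianReal m' v S :=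
          add_le_add_left h2 _
      _ = ENNReal.ofReal (Real.exp ε) * gaussianReal m' v S + ENNReal.ofReal δ := add_comm _ _
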